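/- Every Perron semigroup of real 2×2 matrices whose index is two is reducible: its matrices share a common invariant linear subspace V of ℝ² with V ≠ {0} and V ≠ ℝ². -/

import Mathlib

open Matrix

open scoped Classical

/-- A complex number `μ` is an eigenvalue of the complex matrix `M`. -/
def IsEigenvalueC {n : Type*} [Fintype n] (M : Matrix n n ℂ) (μ : ℂ) : Prop :=
  ∃ v : n → ℂ, v ≠ 0 ∧ M.mulVec v = μ • v

/-- The spectral radius of a real matrix: the maximum of the moduli of the complex
eigenvalues of its complexification. -/
noncomputable def spectralRadius' {n : Type*} [Fintype n] (A : Matrix n n ℝ) : ℝ :=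
  sSup {r : ℝ | ∃ μ : ℂ, IsEigenvalueC (A.map (fun x : ℝ => (x : ℂ))) μ ∧ r = ‖μ‖}

/-- `A` has a Perron eigenvalue: its spectral radius is a nonnegative eigenvalue of `A`. -/
def HasPerronEigenvalue {n : Type*} [Fintype n] (A : Matrix n n ℝ) : Prop :=
  0 ≤ spectralRadius' A ∧ ∃ v : n → ℝ, v ≠ 0 ∧ A.mulVec v = spectralRadius' A • v

/-- The expansion index of a real matrix: the sum, over all (complex) leading eigenvalues
(those of modulus equal to the spectral radius), of their geometric multiplicities. -/
noncomputable def expansionIndex {n : Type*} [Fintype n] [DecidableEq n]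
    (A : Matrix n n ℝ) : ℕ :=
  ∑ μ ∈ (((A.map (fun x : ℝ => (x : ℂ))).charpoly.roots.toFinset).filter
      (fun μ => ‖μ‖ = spectralRadius' A)),
    Module.finrank ℂ
      (LinearMap.ker (Matrix.toLin' ((A.map (fun x : ℝ => (x : ℂ))) - μ • (1 : Matrix n n ℂ))))

/-- A (multiplicative) semigroup of matrices: a nonempty set closed under multiplication. -/
def IsMatrixSemigroup {n : Type*} [Fintype n] (S : Set (Matrix n n ℝ)) : Prop :=
  S.Nonempty ∧ ∀ A ∈ S, ∀ B ∈ S, A * B ∈ S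

/-- An irreducible set of matrices: no common invariant subspace other than `{0}` and the
whole space. -/
def MatIrreducible {n : Type*} [Fintype n] (S : Set (Matrix n n ℝ)) : Prop :=
  ¬ ∃ V : Submodule ℝ (n → ℝ), V ≠ ⊥ ∧ V ≠ ⊤ ∧ ∀ A ∈ S, ∀ x ∈ V, A.mulVec x ∈ V

/-- A proper cone: a closed convex cone with nonempty interior which is pointed. -/
def IsProperCone {n : Type*} [Fintype n] (K : Set (n → ℝ)) : Prop :=
  IsClosed K ∧ (∀ x ∈ K, ∀ y ∈ K, x + y ∈ K) ∧
    (∀ t : ℝ, 0 ≤ t → ∀ x ∈ K, t • x ∈ K) ∧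
    (interior K).Nonempty ∧ (∀ x ∈ K, -x ∈ K → x = 0)

lemma charpoly_eval2 (M : Matrix (Fin 2) (Fin 2) ℂ) (μ : ℂ) :
    M.charpoly.eval μ = (μ - M 0 0) * (μ - M 1 1) - M 0 1 * M 1 0 := by
  rw [Matrix.charpoly, Matrix.det_fin_two, Matrix.charmatrix_apply_eq,
    Matrix.charmatrix_apply_eq, Matrix.charmatrix_apply_ne _ _ _ (by decide),
    Matrix.charmatrix_apply_ne _ _ _ (by decide)]
  simp only [Polynomial.eval_sub, Polynomial.eval_mul, Polynomial.eval_X, Polynomial.eval_C, Polynomial.eval_neg, Polynomial.eval_add]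
  ring

lemma eig_root (M : Matrix (Fin 2) (Fin 2) ℂ) (μ : ℂ)
    (h : ∃ v : Fin 2 → ℂ, v ≠ 0 ∧ M.mulVec v = μ • v) : M.charpoly.eval μ = 0 := by
  obtain ⟨v, hv, hMv⟩ := h
  have hdet : (M - μ • 1).det = 0 := by
    rw [← Matrix.exists_mulVec_eq_zero_iff]
    exact ⟨v, hv, by rw [Matrix.sub_mulVec, Matrix.smul_mulVec, Matrix.one_mulVec,
      hMv, sub_self]⟩
  rw [Matrix.det_fin_two] at hdet
  simp [Matrix.sub_apply, Matrix.smul_apply, Matrix.one_apply] at hdet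
  rw [charpoly_eval2]
  linear_combination hdet

lemma cayley2 (A : Matrix (Fin 2) (Fin 2) ℝ) : A * A = A.trace • A - A.det • 1 := by
  ext i j
  fin_cases i <;> fin_cases j <;>
    simp [Matrix.mul_apply, Fin.sum_univ_two, Matrix.trace_fin_two, Matrix.det_fin_two,
      Matrix.one_apply] <;> ring

lemma keyL (A : Matrix (Fin 2) (Fin 2) ℝ) (hP : HasPerronEigenvalue A)
    (hE : 2 ≤ expansionIndex A) :
    ∃ ρ : ℝ, ∃ v : Fin 2 → ℝ, 0 ≤ ρ ∧ v ≠ 0 ∧ A.mulVec v = ρ • v ∧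
      (A = ρ • 1 ∨ (0 < ρ ∧ A.trace = 0 ∧ A * A = (ρ ^ 2) • (1 : Matrix (Fin 2) (Fin 2) ℝ))) := by
  classical
  obtain ⟨hρ0, v, hv, hAv⟩ := hP
  set ρ : ℝ := spectralRadius' A with hρdef
  set M : Matrix (Fin 2) (Fin 2) ℂ := A.map (fun x : ℝ => (x : ℂ)) with hMdef
  refine ⟨ρ, v, hρ0, hv, hAv, ?_⟩
  -- (ρ : ℂ) is an eigenvalue of M
  have hMij : ∀ i j, M i j = (A i j : ℂ) := fun i j => rfl
  have heig : ∃ w : Fin 2 → ℂ, w ≠ 0 ∧ M.mulVec w = (ρ : ℂ) • w := by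
    refine ⟨fun i => (v i : ℂ), ?_, ?_⟩
    · intro h
      apply hv
      funext i
      have h2 := congrFun h i
      simp only [Pi.zero_apply] at h2 ⊢
      exact_mod_cast h2
    · funext i
      have := congrFun hAv i
      simp only [Matrix.mulVec, dotProduct, Fin.sum_univ_two, Pi.smul_apply,
        smul_eq_mul] at this ⊢
      rw [hMij, hMij]
      exact_mod_cast congrArg (fun x : ℝ => (x : ℂ)) this
  have hroot : M.charpoly.eval (ρ : ℂ) = 0 := eig_root M _ heig
  have hmem : (ρ : ℂ) ∈ (M.charpoly.roots.toFinset.filter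
      (fun μ => ‖μ‖ = spectralRadius' A)) := by
    rw [Finset.mem_filter, Multiset.mem_toFinset, Polynomial.mem_roots']
    exact ⟨⟨(Matrix.charpoly_monic M).ne_zero, hroot⟩, by
      simp [Complex.norm_real, abs_of_nonneg hρ0, hρdef]; exact hρ0⟩
  by_cases hone : ∀ μ ∈ (M.charpoly.roots.toFinset.filter
      (fun μ => ‖μ‖ = spectralRadius' A)), μ = (ρ : ℂ)
  · -- single leading eigenvalue: geometric multiplicity 2, so M = ρ • 1
    left
    have hFs : (M.charpoly.roots.toFinset.filter (fun μ => ‖μ‖ = spectralRadius' A))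
        = {(ρ : ℂ)} := Finset.eq_singleton_iff_unique_mem.mpr ⟨hmem, hone⟩
    have hE' : 2 ≤ Module.finrank ℂ
        (LinearMap.ker (Matrix.toLin' (M - (ρ : ℂ) • (1 : Matrix (Fin 2) (Fin 2) ℂ)))) := by
      have := hE
      unfold expansionIndex at this
      rw [show ((A.map (fun x : ℝ => (x : ℂ))).charpoly.roots.toFinset.filter
        (fun μ => ‖μ‖ = spectralRadius' A)) = {(ρ : ℂ)} from hFs] at this
      simpa using this
    have hle : Module.finrank ℂ
        (LinearMap.ker (Matrix.toLin' (M - (ρ : ℂ) • (1 : Matrix (Fin 2) (Fin 2) ℂ)))) ≤ 2 := by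
      have := Submodule.finrank_le
        (LinearMap.ker (Matrix.toLin' (M - (ρ : ℂ) • (1 : Matrix (Fin 2) (Fin 2) ℂ))))
      simpa using this
    have hker : LinearMap.ker (Matrix.toLin' (M - (ρ : ℂ) • (1 : Matrix (Fin 2) (Fin 2) ℂ))) = ⊤ := by
      apply Submodule.eq_top_of_finrank_eq
      · have h2 : Module.finrank ℂ (Fin 2 → ℂ) = 2 := by simp
        rw [h2]
        omega
    have hM0 : M - (ρ : ℂ) • (1 : Matrix (Fin 2) (Fin 2) ℂ) = 0 := by
      have h0 : Matrix.toLin' (M - (ρ : ℂ) • (1 : Matrix (Fin 2) (Fin 2) ℂ)) = 0 :=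
        LinearMap.ker_eq_top.mp hker
      exact Matrix.toLin'.injective (by simpa using h0)
    have hM : M = (ρ : ℂ) • 1 := by rwa [sub_eq_zero] at hM0
    ext i j
    have := congrFun (congrFun hM i) j
    rw [hMij] at this
    simp only [Matrix.smul_apply, Matrix.one_apply, smul_eq_mul] at this ⊢
    by_cases hij : i = j <;> simp [hij] at this ⊢ <;> exact_mod_cast this
  · -- two distinct leading eigenvalues
    right
    push_neg at hone
    obtain ⟨μ, hμF, hμne⟩ := hone
    rw [Finset.mem_filter, Multiset.mem_toFinset, Polynomial.mem_roots'] at hμF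
    obtain ⟨⟨_, hμroot⟩, hμnorm⟩ := hμF
    rw [Polynomial.IsRoot] at hμroot
    rw [charpoly_eval2] at hroot hμroot
    rw [hMij, hMij, hMij, hMij] at hroot hμroot
    -- μ = trace - ρ
    have hsum : μ = ((A 0 0 : ℂ) + (A 1 1 : ℂ)) - (ρ : ℂ) := by
      have hfac : ((ρ : ℂ) - μ) * (((ρ : ℂ) + μ) - ((A 0 0 : ℂ) + (A 1 1 : ℂ))) = 0 := by
        linear_combination hroot - hμroot
      rcases mul_eq_zero.mp hfac with h | h
      · exact absurd (by linear_combination -h) hμne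
      · linear_combination h
    set t : ℝ := A 0 0 + A 1 1 with ht
    have hμt : μ = ((t - ρ : ℝ) : ℂ) := by rw [hsum]; push_cast [ht]; ring
    have habs : |t - ρ| = ρ := by
      have := hμnorm
      rw [hμt] at this
      rwa [Complex.norm_real, ← hρdef] at this
    have htρ : t - ρ = -ρ := by
      rcases abs_cases (t - ρ) with ⟨h1, _⟩ | ⟨h1, _⟩
      · exfalso
        apply hμne
        rw [hμt]
        norm_cast
        linarith [habs, h1]
      · linarith [habs, h1]
    have hρpos : 0 < ρ := by
      rcases lt_or_eq_of_le hρ0 with h | h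
      · exact h
      · exfalso
        apply hμne
        rw [hμt]
        norm_cast
        linarith
    have htr : A.trace = 0 := by
      rw [Matrix.trace_fin_two]; linarith
    have hdet : A.det = -ρ ^ 2 := by
      -- from real part of hroot
      have hre : (ρ - A 0 0) * (ρ - A 1 1) - A 0 1 * A 1 0 = 0 := by
        have : (((ρ - A 0 0) * (ρ - A 1 1) - A 0 1 * A 1 0 : ℝ) : ℂ) = 0 := by
          push_cast
          linear_combination hroot
        exact_mod_cast this
      rw [Matrix.det_fin_two]
      rw [Matrix.trace_fin_two] at htr
      nlinarith [hre, htr]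
    refine ⟨hρpos, htr, ?_⟩
    rw [cayley2, htr, hdet]
    simp

lemma anticomm2 (X Y : Matrix (Fin 2) (Fin 2) ℝ) (hX : X.trace = 0) (hY : Y.trace = 0)
    (hXY : (X * Y).trace = 0) : X * Y = -(Y * X) := by
  rw [Matrix.trace_fin_two] at hX hY
  rw [Matrix.trace_fin_two, Matrix.mul_apply, Matrix.mul_apply, Fin.sum_univ_two,
    Fin.sum_univ_two] at hXY
  have hx : X 1 1 = -X 0 0 := by linarith
  have hy : Y 1 1 = -Y 0 0 := by linarith
  rw [hx, hy] at hXY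
  ext i j
  fin_cases i <;> fin_cases j <;>
    simp [Matrix.mul_apply, Fin.sum_univ_two, hx, hy] <;> linarith [hXY]

/-- Every Perron semigroup of `2×2` matrices of index two is reducible. -/
theorem perron_semigroup_2x2_index_two_reducible
    (S : Set (Matrix (Fin 2) (Fin 2) ℝ))
    (hsemi : IsMatrixSemigroup S)
    (hperron : ∀ A ∈ S, HasPerronEigenvalue A)
    (hindex : (∀ A ∈ S, 2 ≤ expansionIndex A) ∧ (∃ A ∈ S, expansionIndex A = 2)) :
    ∃ V : Submodule ℝ (Fin 2 → ℝ), V ≠ ⊥ ∧ V ≠ ⊤ ∧ ∀ A ∈ S, ∀ x ∈ V, A.mulVec x ∈ V := by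
  classical
  obtain ⟨hlb, -⟩ := hindex
  have hkey : ∀ A ∈ S, ∃ ρ : ℝ, ∃ v : Fin 2 → ℝ, 0 ≤ ρ ∧ v ≠ 0 ∧ A.mulVec v = ρ • v ∧
      (A = ρ • 1 ∨ (0 < ρ ∧ A.trace = 0 ∧ A * A = (ρ ^ 2) • (1 : Matrix (Fin 2) (Fin 2) ℝ))) :=
    fun A hA => keyL A (hperron A hA) (hlb A hA)
  by_cases hsc : ∀ A ∈ S, ∃ c : ℝ, A = c • (1 : Matrix (Fin 2) (Fin 2) ℝ)
  · -- all scalar: any line works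
    refine ⟨Submodule.span ℝ {![1, 0]}, ?_, ?_, ?_⟩
    · rw [Ne, Submodule.span_singleton_eq_bot]
      intro h
      have := congrFun h 0
      norm_num at this
    · intro h
      have h1 : Module.finrank ℝ (Submodule.span ℝ ({![1, 0]} : Set (Fin 2 → ℝ))) = 1 :=
        finrank_span_singleton (by
          intro h
          have := congrFun h 0
          norm_num at this)
      rw [h] at h1
      rw [finrank_top] at h1
      simp at h1
    · intro A hA x hx
      obtain ⟨c, rfl⟩ := hsc A hA
      have : (c • (1 : Matrix (Fin 2) (Fin 2) ℝ)).mulVec x = c • x := by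
        rw [Matrix.smul_mulVec, Matrix.one_mulVec]
      rw [this]
      exact Submodule.smul_mem _ c hx
  · -- there is a non-scalar element A₀
    push_neg at hsc
    obtain ⟨A₀, hA₀S, hA₀ns⟩ := hsc
    obtain ⟨ρ₀, v₀, hρ₀0, hv₀, hAv₀, hd₀⟩ := hkey A₀ hA₀S
    have hd₀' : 0 < ρ₀ ∧ A₀.trace = 0 ∧ A₀ * A₀ = (ρ₀ ^ 2) • (1 : Matrix (Fin 2) (Fin 2) ℝ) := by
      rcases hd₀ with h | h
      · exact absurd h (hA₀ns ρ₀)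
      · exact h
    obtain ⟨hρ₀pos, htr₀, hsq₀⟩ := hd₀'
    refine ⟨Submodule.span ℝ {v₀}, ?_, ?_, ?_⟩
    · rw [Ne, Submodule.span_singleton_eq_bot]
      exact hv₀
    · intro h
      have h1 : Module.finrank ℝ (Submodule.span ℝ ({v₀} : Set (Fin 2 → ℝ))) = 1 :=
        finrank_span_singleton hv₀
      rw [h, finrank_top] at h1
      simp at h1
    · intro A hA x hx
      -- reduce to showing A.mulVec v₀ ∈ span {v₀}
      have hkey2 : A.mulVec v₀ ∈ Submodule.span ℝ ({v₀} : Set (Fin 2 → ℝ)) := by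
        obtain ⟨ρ, v, hρ0, hvne, hAv, hd⟩ := hkey A hA
        rcases hd with h | h
        · -- A scalar
          rw [h, Matrix.smul_mulVec, Matrix.one_mulVec]
          exact Submodule.smul_mem _ ρ (Submodule.mem_span_singleton_self v₀)
        · obtain ⟨hρpos, htr, hsq⟩ := h
          -- consider B = A₀ * A
          have hBS : A₀ * A ∈ S := hsemi.2 A₀ hA₀S A hA
          obtain ⟨σ, w, hσ0, hwne, hBw, hdB⟩ := hkey (A₀ * A) hBS
          rcases hdB with hB | hB
          · -- A₀ * A = σ • 1, so A is a multiple of A₀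
            have hmul : (ρ₀ ^ 2) • A = σ • A₀ := by
              have h1 : A₀ * (A₀ * A) = (ρ₀ ^ 2) • A := by
                rw [← mul_assoc, hsq₀, Matrix.smul_mul, one_mul]
              have h2 : A₀ * (A₀ * A) = σ • A₀ := by
                rw [hB, Matrix.mul_smul, mul_one]
              rw [← h1, h2]
            have hAeq : A = (σ / ρ₀ ^ 2) • A₀ := by
              have hne : (ρ₀ ^ 2) ≠ 0 := by positivity
              have := congrArg (fun X : Matrix (Fin 2) (Fin 2) ℝ => (ρ₀ ^ 2)⁻¹ • X) hmul
              simp only [smul_smul, inv_mul_cancel₀ hne, one_smul] at this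
              rw [this, div_eq_inv_mul]
            rw [hAeq, Matrix.smul_mulVec, hAv₀, smul_smul]
            exact Submodule.smul_mem _ _ (Submodule.mem_span_singleton_self v₀)
          · -- B non-scalar: contradiction
            exfalso
            obtain ⟨hσpos, htrB, hsqB⟩ := hB
            have hanti : A₀ * A = -(A * A₀) := anticomm2 A₀ A htr₀ htr htrB
            have hsq2 : (A₀ * A) * (A₀ * A) = (-(ρ₀ ^ 2 * ρ ^ 2)) • (1 : Matrix (Fin 2) (Fin 2) ℝ) := by
              have hanti' : A * A₀ = -(A₀ * A) := by rw [hanti, neg_neg]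
              calc (A₀ * A) * (A₀ * A) = A₀ * (A * A₀) * A := by noncomm_ring
                _ = A₀ * (-(A₀ * A)) * A := by rw [hanti']
                _ = -((A₀ * A₀) * (A * A)) := by noncomm_ring
                _ = -((ρ₀ ^ 2) • (1 : Matrix (Fin 2) (Fin 2) ℝ) * ((ρ ^ 2) • (1 : Matrix (Fin 2) (Fin 2) ℝ))) := by
                    rw [hsq₀, hsq]
                _ = (-(ρ₀ ^ 2 * ρ ^ 2)) • (1 : Matrix (Fin 2) (Fin 2) ℝ) := by
                    rw [Matrix.smul_mul, Matrix.mul_smul, one_mul, smul_smul, neg_smul]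
            rw [hsqB] at hsq2
            have := congrFun (congrFun hsq2 0) 0
            simp [Matrix.smul_apply, Matrix.one_apply] at this
            nlinarith
      rw [Submodule.mem_span_singleton] at hx
      obtain ⟨t, rfl⟩ := hx
      rw [Matrix.mulVec_smul]
      exact Submodule.smul_mem _ t hkey2
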